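/- If the second dual A** with the first Arens product is approximately amenable, then A is approximately amenable. -/

import Mathlib

open ContinuousLinearMap Filter Topology

open ContinuousLinearMap Filter Topology

/-- A Banach `A`-bimodule: a complete normed `ℂ`-space with commuting continuous
left and right `A`-actions, jointly bounded and bilinear. -/
structure BBimod (A : Type) [NonUnitalNormedRing A] [NormedSpace ℂ A] where
  carrier : Type
  [grp : NormedAddCommGroup carrier]
  [mod : NormedSpace ℂ carrier]
  [complete : CompleteSpace carrier]
  lsmul : A → carrier →L[ℂ] carrier
  rsmul : A → carrier →L[ℂ] carrier
  lsmul_add : ∀ a b, lsmul (a + b) = lsmul a + lsmul b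
  rsmul_add : ∀ a b, rsmul (a + b) = rsmul a + rsmul b
  lsmul_smul : ∀ (c : ℂ) (a), lsmul (c • a) = c • lsmul a
  rsmul_smul : ∀ (c : ℂ) (a), rsmul (c • a) = c • rsmul a
  lsmul_mul : ∀ a b, lsmul (a * b) = (lsmul a).comp (lsmul b)
  rsmul_mul : ∀ a b, rsmul (a * b) = (rsmul b).comp (rsmul a)
  lsmul_rsmul : ∀ a b, (lsmul a).comp (rsmul b) = (rsmul b).comp (lsmul a)
  bound : ∃ C : ℝ, ∀ a, ‖lsmul a‖ ≤ C * ‖a‖ ∧ ‖rsmul a‖ ≤ C * ‖a‖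

attribute [instance] BBimod.grp BBimod.mod BBimod.complete

variable {A : Type} [NonUnitalNormedRing A] [NormedSpace ℂ A]

/-- The dual of a Banach bimodule, with the canonical dual actions
`⟨u, Λ·a⟩ = ⟨a·u, Λ⟩` and `⟨u, a·Λ⟩ = ⟨u·a, Λ⟩`. -/
noncomputable def BBimod.dual (M : BBimod A) : BBimod A where
  carrier := M.carrier →L[ℂ] ℂ
  lsmul a := (compL ℂ M.carrier M.carrier ℂ).flip (M.rsmul a)
  rsmul a := (compL ℂ M.carrier M.carrier ℂ).flip (M.lsmul a)
  lsmul_add a b := by ext Λ x; simp [M.rsmul_add]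
  rsmul_add a b := by ext Λ x; simp [M.lsmul_add]
  lsmul_smul c a := by ext Λ x; simp [M.rsmul_smul]
  rsmul_smul c a := by ext Λ x; simp [M.lsmul_smul]
  lsmul_mul a b := by ext Λ x; simp [M.rsmul_mul]
  rsmul_mul a b := by ext Λ x; simp [M.lsmul_mul]
  lsmul_rsmul a b := by
    ext Λ x
    have h : M.lsmul b (M.rsmul a x) = M.rsmul a (M.lsmul b x) := by
      have := congrArg (fun T : M.carrier →L[ℂ] M.carrier => T x) (M.lsmul_rsmul b a)
      simpa using this
    simp [h]
  bound := by
    obtain ⟨C, hC⟩ := M.bound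
    refine ⟨C, fun a => ⟨?_, ?_⟩⟩
    · refine opNorm_le_bound _ ?_ fun Λ => ?_
      · exact le_trans (norm_nonneg _) (hC a).2
      · calc ‖Λ.comp (M.rsmul a)‖ ≤ ‖Λ‖ * ‖M.rsmul a‖ := opNorm_comp_le _ _
          _ ≤ (C * ‖a‖) * ‖Λ‖ := by
              rw [mul_comm]
              exact mul_le_mul_of_nonneg_right (hC a).2 (norm_nonneg _)
    · refine opNorm_le_bound _ ?_ fun Λ => ?_
      · exact le_trans (norm_nonneg _) (hC a).1
      · calc ‖Λ.comp (M.lsmul a)‖ ≤ ‖Λ‖ * ‖M.lsmul a‖ := opNorm_comp_le _ _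
          _ ≤ (C * ‖a‖) * ‖Λ‖ := by
              rw [mul_comm]
              exact mul_le_mul_of_nonneg_right (hC a).1 (norm_nonneg _)

variable (A) [IsScalarTower ℂ A A] [SMulCommClass ℂ A A] [CompleteSpace A]

/-- `A` as a Banach bimodule over itself. -/
noncomputable def BBimod.base : BBimod A where
  carrier := A
  lsmul a := ContinuousLinearMap.mul ℂ A a
  rsmul a := (ContinuousLinearMap.mul ℂ A).flip a
  lsmul_add a b := by ext x; simp [add_mul]
  rsmul_add a b := by ext x; simp [mul_add]
  lsmul_smul c a := by ext x; simp [smul_mul_assoc]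
  rsmul_smul c a := by ext x; simp [mul_smul_comm]
  lsmul_mul a b := by ext x; simp [mul_assoc]
  rsmul_mul a b := by ext x; simp [mul_assoc]
  lsmul_rsmul a b := by ext x; simp [mul_assoc]
  bound := by
    refine ⟨1, fun a => ⟨?_, ?_⟩⟩
    · simpa using ContinuousLinearMap.opNorm_mul_apply_le ℂ A a
    · refine le_trans (opNorm_le_bound _ (norm_nonneg a) fun x => ?_) (by simp)
      simpa [mul_comm] using norm_mul_le x a


/-- The `n`-th dual `A^(n)` of `A` as a Banach `A`-bimodule. -/
noncomputable def iterDual : ℕ → BBimod A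
  | 0 => BBimod.base A
  | n + 1 => (iterDual n).dual

variable {A}

/-- `D` is a derivation from `A` into the Banach bimodule `M`. -/
def IsDerivation (M : BBimod A) (D : A →L[ℂ] M.carrier) : Prop :=
  ∀ a b : A, D (a * b) = M.lsmul a (D b) + M.rsmul b (D a)

/-- `D` is an inner derivation. -/
def IsInner (M : BBimod A) (D : A →L[ℂ] M.carrier) : Prop :=
  ∃ x : M.carrier, ∀ a : A, D a = M.lsmul a x - M.rsmul a x

/-- `D` is approximately inner: there is a net `(x_i)` in `M` with
`D a = lim_i (a·x_i − x_i·a)` for every `a`. -/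
def IsApproxInner (M : BBimod A) (D : A →L[ℂ] M.carrier) : Prop :=
  ∃ (ι : Type) (l : Filter ι) (x : ι → M.carrier), l.NeBot ∧
    ∀ a : A, Tendsto (fun i => M.lsmul a (x i) - M.rsmul a (x i)) l (𝓝 (D a))

variable (A)

/-- `A` is weakly amenable. -/
def WeaklyAmenable : Prop :=
  ∀ D : A →L[ℂ] (iterDual A 1).carrier, IsDerivation (iterDual A 1) D → IsInner (iterDual A 1) D

/-- `A` is approximately `n`-weakly amenable. -/
def ApproxNWeaklyAmenable (n : ℕ) : Prop :=
  ∀ D : A →L[ℂ] (iterDual A n).carrier,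
    IsDerivation (iterDual A n) D → IsApproxInner (iterDual A n) D

/-- `A` is `n`-weakly amenable. -/
def NWeaklyAmenable (n : ℕ) : Prop :=
  ∀ D : A →L[ℂ] (iterDual A n).carrier,
    IsDerivation (iterDual A n) D → IsInner (iterDual A n) D

/-- `A` is approximately weakly amenable. -/
def ApproxWeaklyAmenable : Prop := ApproxNWeaklyAmenable A 1

/-- `A` is approximately amenable: every continuous derivation into the dual of a
Banach `A`-bimodule is approximately inner. -/
def ApproxAmenable : Prop :=
  ∀ (X : BBimod A) (D : A →L[ℂ] X.dual.carrier), IsDerivation X.dual D → IsApproxInner X.dual D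

section SecondDual
variable (A : Type) [NonUnitalNormedRing A] [NormedSpace ℂ A]
  [IsScalarTower ℂ A A] [SMulCommClass ℂ A A]

/-- The map `f ↦ n □ f` entering the definition of the first Arens product. -/
noncomputable def arensAux (n : (A →L[ℂ] ℂ) →L[ℂ] ℂ) :
    (A →L[ℂ] ℂ) →L[ℂ] (A →L[ℂ] ℂ) :=
  (compL ℂ A (A →L[ℂ] ℂ) ℂ n).comp
    (((compL ℂ A (A →L[ℂ] A) (A →L[ℂ] ℂ)).flip (ContinuousLinearMap.mul ℂ A)).comp
      (compL ℂ A A ℂ))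

/-- The first Arens product `m □ n` on the second dual of `A`. -/
noncomputable def arens (m n : (A →L[ℂ] ℂ) →L[ℂ] ℂ) : (A →L[ℂ] ℂ) →L[ℂ] ℂ :=
  m.comp (arensAux A n)

variable {A}

lemma arens_add_left (m n p : (A →L[ℂ] ℂ) →L[ℂ] ℂ) :
    arens A (m + n) p = arens A m p + arens A n p := by
  ext f; simp [arens]

lemma arens_add_right (m n p : (A →L[ℂ] ℂ) →L[ℂ] ℂ) :
    arens A m (n + p) = arens A m n + arens A m p := by
  ext f; simp [arens, arensAux, map_add]

lemma arens_zero_left (m : (A →L[ℂ] ℂ) →L[ℂ] ℂ) : arens A 0 m = 0 := by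
  ext f; simp [arens]

lemma arens_zero_right (m : (A →L[ℂ] ℂ) →L[ℂ] ℂ) : arens A m 0 = 0 := by
  ext f
  have h0 : arensAux A (0 : (A →L[ℂ] ℂ) →L[ℂ] ℂ) f = 0 := by ext a; rfl
  show m (arensAux A 0 f) = 0
  rw [h0, map_zero]

lemma arens_smul_left (c : ℂ) (m n : (A →L[ℂ] ℂ) →L[ℂ] ℂ) :
    arens A (c • m) n = c • arens A m n := by
  ext f; simp [arens]

lemma arens_smul_right (c : ℂ) (m n : (A →L[ℂ] ℂ) →L[ℂ] ℂ) :
    arens A m (c • n) = c • arens A m n := by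
  ext f
  have hs : arensAux A (c • n) f = c • arensAux A n f := by ext a; rfl
  show m (arensAux A (c • n) f) = c • m (arensAux A n f)
  rw [hs, map_smul]

lemma arens_assoc (m n p : (A →L[ℂ] ℂ) →L[ℂ] ℂ) :
    arens A (arens A m n) p = arens A m (arens A n p) := by
  ext f
  show m (arensAux A n (arensAux A p f)) = m (arensAux A (arens A n p) f)
  congr 1
  ext a
  show n ((arensAux A p f).comp (ContinuousLinearMap.mul ℂ A a)) =
    n (arensAux A p (f.comp (ContinuousLinearMap.mul ℂ A a)))
  congr 1
  ext b
  show p (f.comp (ContinuousLinearMap.mul ℂ A (a * b))) =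
    p ((f.comp (ContinuousLinearMap.mul ℂ A a)).comp (ContinuousLinearMap.mul ℂ A b))
  congr 1
  ext c
  exact congrArg f (mul_assoc a b c)

lemma arens_norm (m n : (A →L[ℂ] ℂ) →L[ℂ] ℂ) : ‖arens A m n‖ ≤ ‖m‖ * ‖n‖ := by
  have hAux : ‖arensAux A n‖ ≤ ‖n‖ := by
    refine opNorm_le_bound _ (norm_nonneg n) fun f => ?_
    have hHf : ‖(((compL ℂ A (A →L[ℂ] A) (A →L[ℂ] ℂ)).flip
        (ContinuousLinearMap.mul ℂ A)).comp (compL ℂ A A ℂ)) f‖ ≤ ‖f‖ := by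
      refine opNorm_le_bound _ (norm_nonneg f) fun a => ?_
      show ‖f.comp (ContinuousLinearMap.mul ℂ A a)‖ ≤ ‖f‖ * ‖a‖
      calc ‖f.comp (ContinuousLinearMap.mul ℂ A a)‖
          ≤ ‖f‖ * ‖ContinuousLinearMap.mul ℂ A a‖ := opNorm_comp_le _ _
        _ ≤ ‖f‖ * ‖a‖ :=
            mul_le_mul_of_nonneg_left (ContinuousLinearMap.opNorm_mul_apply_le ℂ A a)
              (norm_nonneg f)
    calc ‖arensAux A n f‖
        ≤ ‖n‖ * ‖(((compL ℂ A (A →L[ℂ] A) (A →L[ℂ] ℂ)).flip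
            (ContinuousLinearMap.mul ℂ A)).comp (compL ℂ A A ℂ)) f‖ := opNorm_comp_le _ _
      _ ≤ ‖n‖ * ‖f‖ := mul_le_mul_of_nonneg_left hHf (norm_nonneg n)
  calc ‖arens A m n‖ ≤ ‖m‖ * ‖arensAux A n‖ := opNorm_comp_le _ _
    _ ≤ ‖m‖ * ‖n‖ := mul_le_mul_of_nonneg_left hAux (norm_nonneg m)

variable (A)

/-- The second dual `A**` of `A`, as a type synonym, equipped with the
first Arens product. -/
def SecondDual : Type := (A →L[ℂ] ℂ) →L[ℂ] ℂ

noncomputable instance : NormedAddCommGroup (SecondDual A) :=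
  (inferInstance : NormedAddCommGroup ((A →L[ℂ] ℂ) →L[ℂ] ℂ))

noncomputable instance : NonUnitalNormedRing (SecondDual A) :=
  { (inferInstance : NormedAddCommGroup (SecondDual A)) with
    mul := arens A
    left_distrib := fun m n p => arens_add_right m n p
    right_distrib := fun m n p => arens_add_left m n p
    zero_mul := fun m => arens_zero_left m
    mul_zero := fun m => arens_zero_right m
    mul_assoc := fun m n p => arens_assoc m n p
    norm_mul_le := fun m n => arens_norm m n }

noncomputable instance : NormedSpace ℂ (SecondDual A) :=
  (inferInstance : NormedSpace ℂ ((A →L[ℂ] ℂ) →L[ℂ] ℂ))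

instance : CompleteSpace (SecondDual A) :=
  (inferInstance : CompleteSpace ((A →L[ℂ] ℂ) →L[ℂ] ℂ))

instance : IsScalarTower ℂ (SecondDual A) (SecondDual A) :=
  ⟨fun c m n => arens_smul_left c m n⟩

instance : SMulCommClass ℂ (SecondDual A) (SecondDual A) :=
  ⟨fun c m n => (arens_smul_right c m n).symm⟩

/-- The canonical embedding of `A` into its second dual. -/
noncomputable def canEmb : A →L[ℂ] SecondDual A := ContinuousLinearMap.apply ℂ ℂ

end SecondDual

section ArensModule

attribute [reducible] BBimod.dual

set_option maxHeartbeats 1000000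
set_option synthInstance.maxHeartbeats 400000
set_option linter.unusedSectionVars false

variable {A : Type} [NonUnitalNormedRing A] [NormedSpace ℂ A]

/-- The right action of a Banach bimodule, bundled as a continuous bilinear map. -/
noncomputable def BBimod.rsmulL (M : BBimod A) : A →L[ℂ] M.carrier →L[ℂ] M.carrier :=
  LinearMap.mkContinuous₂
    (LinearMap.mk₂ ℂ (fun a y => M.rsmul a y)
      (fun a b y => by
        show M.rsmul (a + b) y = M.rsmul a y + M.rsmul b y
        rw [M.rsmul_add]; rfl)
      (fun c a y => by
        show M.rsmul (c • a) y = c • M.rsmul a y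
        rw [M.rsmul_smul]; rfl)
      (fun a y z => (M.rsmul a).map_add y z)
      (fun c a y => (M.rsmul a).map_smul c y))
    (Classical.choose M.bound)
    (fun a y => by
      have h := (Classical.choose_spec M.bound a).2
      calc ‖M.rsmul a y‖ ≤ ‖M.rsmul a‖ * ‖y‖ := (M.rsmul a).le_opNorm y
        _ ≤ Classical.choose M.bound * ‖a‖ * ‖y‖ :=
            mul_le_mul_of_nonneg_right h (norm_nonneg y))

@[simp] lemma BBimod.rsmulL_apply (M : BBimod A) (a : A) (y : M.carrier) :
    M.rsmulL a y = M.rsmul a y := rfl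

/-- The canonical embedding of a Banach bimodule into its double dual. -/
noncomputable def bbIota (M : BBimod A) : M.carrier →L[ℂ] M.dual.dual.carrier :=
  ContinuousLinearMap.apply ℂ ℂ

@[simp] lemma bbIota_apply (M : BBimod A) (x : M.carrier) (f : M.dual.carrier) :
    bbIota M x f = f x := rfl

lemma bbIota_lsmul (M : BBimod A) (a : A) (x : M.carrier) :
    bbIota M (M.lsmul a x) = M.dual.dual.lsmul a (bbIota M x) := by
  ext f; rfl

lemma bbIota_rsmul (M : BBimod A) (a : A) (x : M.carrier) :
    bbIota M (M.rsmul a x) = M.dual.dual.rsmul a (bbIota M x) := by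
  ext f; rfl

lemma bbIota_isDer (M : BBimod A) (D : A →L[ℂ] M.carrier) (hD : IsDerivation M D) :
    IsDerivation M.dual.dual ((bbIota M).comp D) := by
  intro a b
  show bbIota M (D (a * b)) = _
  rw [hD a b, map_add, bbIota_lsmul, bbIota_rsmul]
  rfl

variable [IsScalarTower ℂ A A] [SMulCommClass ℂ A A]

/-- The Arens-type extension of the left action of `A` on the dual `M*` to an
action of `A**`: `(m · Φ)(y) = m(a ↦ Φ(y·a))`. -/
noncomputable def arL (M : BBimod A) (m : (A →L[ℂ] ℂ) →L[ℂ] ℂ) :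
    M.dual.carrier →L[ℂ] M.dual.carrier :=
  (compL ℂ M.carrier (A →L[ℂ] ℂ) ℂ m).comp
    ((((compL ℂ M.carrier (A →L[ℂ] M.carrier) (A →L[ℂ] ℂ)).flip M.rsmulL.flip).comp
      (compL ℂ A M.carrier ℂ)))

@[simp] lemma arL_apply (M : BBimod A) (m : (A →L[ℂ] ℂ) →L[ℂ] ℂ)
    (Φ : M.dual.carrier) (y : M.carrier) :
    arL M m Φ y = m (Φ.comp (M.rsmulL.flip y)) := rfl

lemma arL_add (M : BBimod A) (m n : (A →L[ℂ] ℂ) →L[ℂ] ℂ) :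
    arL M (m + n) = arL M m + arL M n := by
  ext Φ y
  show (m + n) (Φ.comp (M.rsmulL.flip y)) = (arL M m + arL M n) Φ y
  simp only [ContinuousLinearMap.add_apply]
  rfl

lemma arL_smul (M : BBimod A) (c : ℂ) (m : (A →L[ℂ] ℂ) →L[ℂ] ℂ) :
    arL M (c • m) = c • arL M m := by
  ext Φ y
  show (c • m) (Φ.comp (M.rsmulL.flip y)) = (c • arL M m) Φ y
  simp only [ContinuousLinearMap.smul_apply]
  rfl

lemma arL_mul (M : BBimod A) (m n : (A →L[ℂ] ℂ) →L[ℂ] ℂ) :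
    arL M (arens A m n) = (arL M m).comp (arL M n) := by
  ext Φ y
  show m (arensAux A n (Φ.comp (M.rsmulL.flip y)))
      = m ((arL M n Φ).comp (M.rsmulL.flip y))
  congr 1
  ext a
  show n ((Φ.comp (M.rsmulL.flip y)).comp (ContinuousLinearMap.mul ℂ A a))
      = n (Φ.comp (M.rsmulL.flip (M.rsmul a y)))
  congr 1
  ext b
  show Φ (M.rsmul (a * b) y) = Φ (M.rsmul b (M.rsmul a y))
  have := congrArg (fun T : M.carrier →L[ℂ] M.carrier => T y) (M.rsmul_mul a b)
  simpa using congrArg Φ this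

lemma arL_dual_rsmul (M : BBimod A) (n : (A →L[ℂ] ℂ) →L[ℂ] ℂ) (a : A)
    (Φ : M.dual.carrier) :
    arL M n (M.dual.rsmul a Φ) = M.dual.rsmul a (arL M n Φ) := by
  ext y
  show n ((Φ.comp (M.lsmul a)).comp (M.rsmulL.flip y))
      = n (Φ.comp (M.rsmulL.flip (M.lsmul a y)))
  congr 1
  ext b
  show Φ (M.lsmul a (M.rsmul b y)) = Φ (M.rsmul b (M.lsmul a y))
  have := congrArg (fun T : M.carrier →L[ℂ] M.carrier => T y) (M.lsmul_rsmul a b)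
  simpa using congrArg Φ this

lemma arL_canEmb (M : BBimod A) (a : A) (Φ : M.dual.carrier) :
    arL M (canEmb A a) Φ = M.dual.lsmul a Φ := by
  ext y; rfl

lemma arL_norm (M : BBimod A) (m : (A →L[ℂ] ℂ) →L[ℂ] ℂ) :
    ‖arL M m‖ ≤ ‖M.rsmulL.flip‖ * ‖m‖ := by
  have h0 : (0:ℝ) ≤ ‖M.rsmulL.flip‖ := ContinuousLinearMap.opNorm_nonneg _
  have h1 : (0:ℝ) ≤ ‖m‖ := ContinuousLinearMap.opNorm_nonneg _
  refine opNorm_le_bound _ (mul_nonneg h0 h1) fun Φ => ?_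
  have h2 : (0:ℝ) ≤ ‖Φ‖ := ContinuousLinearMap.opNorm_nonneg _
  refine opNorm_le_bound _ (mul_nonneg (mul_nonneg h0 h1) h2) fun y => ?_
  calc ‖arL M m Φ y‖ ≤ ‖m‖ * ‖Φ.comp (M.rsmulL.flip y)‖ := m.le_opNorm _
    _ ≤ ‖m‖ * (‖Φ‖ * ‖M.rsmulL.flip y‖) :=
        mul_le_mul_of_nonneg_left (Φ.opNorm_comp_le _) h1
    _ ≤ ‖m‖ * (‖Φ‖ * (‖M.rsmulL.flip‖ * ‖y‖)) :=
        mul_le_mul_of_nonneg_left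
          (mul_le_mul_of_nonneg_left ((M.rsmulL.flip).le_opNorm y) h2) h1
    _ = ‖M.rsmulL.flip‖ * ‖m‖ * ‖Φ‖ * ‖y‖ := by ring

lemma arW_rsmul_mul_core (M : BBimod A) (m n : (A →L[ℂ] ℂ) →L[ℂ] ℂ) :
    (compL ℂ M.dual.carrier M.dual.carrier ℂ).flip (arL M (arens A m n))
      = ((compL ℂ M.dual.carrier M.dual.carrier ℂ).flip (arL M n)).comp
          ((compL ℂ M.dual.carrier M.dual.carrier ℂ).flip (arL M m)) := by
  rw [arL_mul]
  ext Ψ Φ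
  rfl

lemma arW_lsmul_rsmul_core (M : BBimod A) (m n : (A →L[ℂ] ℂ) →L[ℂ] ℂ) :
    (arL M.dual m).comp ((compL ℂ M.dual.carrier M.dual.carrier ℂ).flip (arL M n))
      = ((compL ℂ M.dual.carrier M.dual.carrier ℂ).flip (arL M n)).comp
          (arL M.dual m) := by
  ext Ψ Φ
  show m ((Ψ.comp (arL M n)).comp (M.dual.rsmulL.flip Φ))
      = m (Ψ.comp (M.dual.rsmulL.flip (arL M n Φ)))
  congr 1
  ext a
  exact congrArg Ψ (arL_dual_rsmul M n a Φ)

/-- The Arens-type `A**`-bimodule structure on the dual of the double dual `M**`. -/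
noncomputable def arW (M : BBimod A) : BBimod (SecondDual A) where
  carrier := M.dual.dual.carrier
  lsmul m := arL M.dual m
  rsmul m := (compL ℂ M.dual.carrier M.dual.carrier ℂ).flip (arL M m)
  lsmul_add m n := arL_add M.dual m n
  rsmul_add m n :=
    (congrArg ((compL ℂ M.dual.carrier M.dual.carrier ℂ).flip) (arL_add M m n)).trans
      (map_add _ _ _)
  lsmul_smul c m := arL_smul M.dual c m
  rsmul_smul c m :=
    (congrArg ((compL ℂ M.dual.carrier M.dual.carrier ℂ).flip) (arL_smul M c m)).trans
      (map_smul _ _ _)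
  lsmul_mul m n := arL_mul M.dual m n
  rsmul_mul m n := arW_rsmul_mul_core M m n
  lsmul_rsmul m n := arW_lsmul_rsmul_core M m n
  bound := by
    refine ⟨max ‖M.dual.rsmulL.flip‖ ‖M.rsmulL.flip‖, fun m => ⟨?_, ?_⟩⟩
    · exact le_trans (arL_norm M.dual m)
        (mul_le_mul_of_nonneg_right (le_max_left _ _)
          (ContinuousLinearMap.opNorm_nonneg m))
    · have h0 : (0:ℝ) ≤ ‖M.rsmulL.flip‖ := ContinuousLinearMap.opNorm_nonneg _
      have h1 : (0:ℝ) ≤ ‖m‖ := ContinuousLinearMap.opNorm_nonneg _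
      refine opNorm_le_bound _
        (mul_nonneg (le_trans h0 (le_max_right _ _)) h1) fun Ψ => ?_
      calc ‖((compL ℂ M.dual.carrier M.dual.carrier ℂ).flip (arL M m)) Ψ‖
          = ‖Ψ.comp (arL M m)‖ := rfl
        _ ≤ ‖Ψ‖ * ‖arL M m‖ := opNorm_comp_le _ _
        _ ≤ ‖Ψ‖ * (‖M.rsmulL.flip‖ * ‖m‖) :=
            mul_le_mul_of_nonneg_left (arL_norm M m)
              (ContinuousLinearMap.opNorm_nonneg Ψ)
        _ = ‖M.rsmulL.flip‖ * ‖m‖ * ‖Ψ‖ := by ring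
        _ ≤ max ‖M.dual.rsmulL.flip‖ ‖M.rsmulL.flip‖ * ‖m‖ * ‖Ψ‖ :=
            mul_le_mul_of_nonneg_right
              (mul_le_mul_of_nonneg_right (le_max_right _ _) h1)
              (ContinuousLinearMap.opNorm_nonneg Ψ)

attribute [reducible] arW

/-- The second adjoint of a derivation. -/
noncomputable def bigDer (M : BBimod A) (D : A →L[ℂ] M.carrier) :
    SecondDual A →L[ℂ] (arW M).carrier :=
  (compL ℂ M.dual.carrier (A →L[ℂ] ℂ) ℂ).flip ((compL ℂ A M.carrier ℂ).flip D)

lemma bigDer_core (M : BBimod A) (D : A →L[ℂ] M.carrier) (hD : IsDerivation M D)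
    (m n : (A →L[ℂ] ℂ) →L[ℂ] ℂ) :
    bigDer M D (arens A m n)
      = arL M.dual m (bigDer M D n)
        + (compL ℂ M.dual.carrier M.dual.carrier ℂ).flip (arL M n) (bigDer M D m) := by
  ext Φ
  rw [ContinuousLinearMap.add_apply]
  show m (arensAux A n (Φ.comp D))
      = m ((bigDer M D n).comp (M.dual.rsmulL.flip Φ)) + m ((arL M n Φ).comp D)
  rw [← map_add]
  congr 1
  ext a
  rw [ContinuousLinearMap.add_apply]
  show n ((Φ.comp D).comp (ContinuousLinearMap.mul ℂ A a))
      = n ((M.dual.rsmul a Φ).comp D) + n (Φ.comp (M.rsmulL.flip (D a)))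
  rw [← map_add]
  congr 1
  ext b
  rw [ContinuousLinearMap.add_apply]
  show Φ (D (a * b)) = Φ (M.lsmul a (D b)) + Φ (M.rsmul b (D a))
  rw [hD a b, map_add]

theorem bigDer_isDer (M : BBimod A) (D : A →L[ℂ] M.carrier) (hD : IsDerivation M D) :
    IsDerivation (arW M) (bigDer M D) :=
  fun m n => bigDer_core M D hD m n

/-- The canonical embedding of `X` into the predual of the double dual of `arW X.dual`. -/
noncomputable def jMap (X : BBimod A) : X.carrier →L[ℂ] (arW X.dual).dual.carrier :=
  (bbIota X.dual.dual).comp (bbIota X)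

/-- The canonical projection from `(arW X.dual)**` back onto `X*`. -/
noncomputable def qMap (X : BBimod A) :
    (arW X.dual).dual.dual.carrier →L[ℂ] X.dual.carrier :=
  (compL ℂ X.carrier ((arW X.dual).dual.carrier) ℂ).flip (jMap X)

lemma jMap_lsmul (X : BBimod A) (a : A) (x : X.carrier) :
    (jMap X x).comp ((arW X.dual).lsmul (canEmb A a)) = jMap X (X.rsmul a x) := by
  ext Ψ
  show (arL X.dual.dual (canEmb A a) Ψ) (bbIota X x) = Ψ (bbIota X (X.rsmul a x))
  rw [arL_canEmb, bbIota_rsmul]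
  rfl

lemma jMap_rsmul (X : BBimod A) (a : A) (x : X.carrier) :
    (jMap X x).comp ((arW X.dual).rsmul (canEmb A a)) = jMap X (X.lsmul a x) := by
  ext Ψ
  show Ψ (arL X.dual (canEmb A a) (bbIota X x)) = Ψ (bbIota X (X.lsmul a x))
  rw [arL_canEmb, bbIota_lsmul]

lemma qMap_lsmul (X : BBimod A) (a : A) (Ξ : (arW X.dual).dual.dual.carrier) :
    qMap X ((arW X.dual).dual.dual.lsmul (canEmb A a) Ξ)
      = X.dual.lsmul a (qMap X Ξ) := by
  ext x
  show Ξ ((jMap X x).comp ((arW X.dual).lsmul (canEmb A a)))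
      = Ξ (jMap X (X.rsmul a x))
  rw [jMap_lsmul]

lemma qMap_rsmul (X : BBimod A) (a : A) (Ξ : (arW X.dual).dual.dual.carrier) :
    qMap X ((arW X.dual).dual.dual.rsmul (canEmb A a) Ξ)
      = X.dual.rsmul a (qMap X Ξ) := by
  ext x
  show Ξ ((jMap X x).comp ((arW X.dual).rsmul (canEmb A a)))
      = Ξ (jMap X (X.lsmul a x))
  rw [jMap_rsmul]

lemma qMap_bigDer (X : BBimod A) (D : A →L[ℂ] X.dual.carrier) (a : A) :
    qMap X (bbIota (arW X.dual) (bigDer X.dual D (canEmb A a))) = D a := by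
  ext x
  rfl

end ArensModule

variable (A : Type) [NonUnitalNormedRing A] [NormedSpace ℂ A]
  [IsScalarTower ℂ A A] [SMulCommClass ℂ A A] [CompleteSpace A]

set_option maxHeartbeats 1000000
set_option synthInstance.maxHeartbeats 400000

/-- If the second dual `A**`, with the first Arens product, is approximately
amenable, then `A` is approximately amenable. -/
theorem approxAmenable_of_secondDual_approxAmenable
    (h : ApproxAmenable (SecondDual A)) : ApproxAmenable A := by
  intro X D hD
  obtain ⟨ι, l, Ξ, hl, hconv⟩ :=
    h ((arW X.dual).dual) ((bbIota (arW X.dual)).comp (bigDer X.dual D))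
      (bbIota_isDer (arW X.dual) (bigDer X.dual D) (bigDer_isDer X.dual D hD))
  refine ⟨ι, l, fun i => qMap X (Ξ i), hl, fun a => ?_⟩
  have key : ∀ i,
      X.dual.lsmul a (qMap X (Ξ i)) - X.dual.rsmul a (qMap X (Ξ i))
        = qMap X ((arW X.dual).dual.dual.lsmul (canEmb A a) (Ξ i)
            - (arW X.dual).dual.dual.rsmul (canEmb A a) (Ξ i)) := fun i => by
    rw [(qMap X).map_sub, qMap_lsmul, qMap_rsmul]
  have ht := ((qMap X).continuous.tendsto
      (((bbIota (arW X.dual)).comp (bigDer X.dual D)) (canEmb A a))).comp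
      (hconv (canEmb A a))
  have hQ : qMap X (((bbIota (arW X.dual)).comp (bigDer X.dual D)) (canEmb A a)) = D a :=
    qMap_bigDer X D a
  rw [hQ] at ht
  exact ht.congr fun i => (key i).symm
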